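/- Let V : X → [0,H] be any function, CB : X × A → [0,∞) a nonnegative bonus function, and P̂ : X × A × X → ℝ any (not necessarily stochastic) estimated model satisfying the validity condition |γ · Σ_{x'} (P(x'|x,a) − P̂(x'|x,a)) V(x')| ≤ CB(x,a) for every (x,a). Define Q(x,a) = Π_H[ r(x,a) + CB(x,a) + γ · Σ_{x'} P̂(x'|x,a) V(x') ], where Π_H clamps a real number to the interval [0,H]. Then for every state-action pair (x,a): r(x,a) + γ (P V)(x,a) ≤ Q(x,a) ≤ r(x,a) + 2·CB(x,a) + γ (P V)(x,a). -/

import Mathlib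

/-- Lemma 1 (bounds on the optimistic Q-iterate).  Let `V : X → [0,H]`, `CB ≥ 0`, and let
`P̂` be any estimated model satisfying the validity condition
`|γ Σ_{x'} (P(x'|x,a) − P̂(x'|x,a)) V(x')| ≤ CB(x,a)`.  With
`Q(x,a) = Π_H[r(x,a) + CB(x,a) + γ (P̂ V)(x,a)]` (clamping to `[0,H]`), for every `(x,a)`:
`r + γ P V ≤ Q ≤ r + 2 CB + γ P V`. -/
theorem stmt_0 {X A : Type*} [Fintype X] [Fintype A] [Nonempty X] [Nonempty A]
    (γ : ℝ) (hγ0 : 0 < γ) (hγ1 : γ < 1) (H : ℝ) (hH : H = 1 / (1 - γ))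
    (P : X → A → X → ℝ) (hP0 : ∀ x a x', 0 ≤ P x a x') (hP1 : ∀ x a, ∑ x', P x a x' = 1)
    (r : X → A → ℝ) (hr0 : ∀ x a, 0 ≤ r x a) (hr1 : ∀ x a, r x a ≤ 1)
    (V : X → ℝ) (hV0 : ∀ x, 0 ≤ V x) (hVH : ∀ x, V x ≤ H)
    (CB : X → A → ℝ) (hCB : ∀ x a, 0 ≤ CB x a)
    (Phat : X → A → X → ℝ)
    (hvalid : ∀ x a, |γ * ∑ x', (P x a x' - Phat x a x') * V x'| ≤ CB x a)
    (Q : X → A → ℝ)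
    (hQ : ∀ x a, Q x a = max (min (r x a + CB x a + γ * ∑ x', Phat x a x' * V x') H) 0) :
    ∀ x a,
      r x a + γ * ∑ x', P x a x' * V x' ≤ Q x a ∧
      Q x a ≤ r x a + 2 * CB x a + γ * ∑ x', P x a x' * V x' := by
  intro x a
  have h1γ : 0 < 1 - γ := by linarith
  have hdiff : γ * ∑ x', (P x a x' - Phat x a x') * V x'
      = γ * ∑ x', P x a x' * V x' - γ * ∑ x', Phat x a x' * V x' := by
    simp only [sub_mul, Finset.sum_sub_distrib, mul_sub, Finset.mul_sum]
  have habs := abs_le.mp (hvalid x a)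
  rw [hdiff] at habs
  have hPV0 : 0 ≤ ∑ x', P x a x' * V x' :=
    Finset.sum_nonneg fun x' _ => mul_nonneg (hP0 x a x') (hV0 x')
  have hPVH : ∑ x', P x a x' * V x' ≤ H := by
    calc ∑ x', P x a x' * V x' ≤ ∑ x', P x a x' * H :=
          Finset.sum_le_sum fun x' _ => mul_le_mul_of_nonneg_left (hVH x') (hP0 x a x')
      _ = H := by rw [← Finset.sum_mul, hP1, one_mul]
  have hH1 : 1 + γ * H ≤ H := by
    rw [hH, le_div_iff₀ h1γ]
    have h := mul_pos hγ0 h1γ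
    field_simp
    linarith
  constructor
  · rw [hQ]
    have hle : r x a + γ * ∑ x', P x a x' * V x'
        ≤ min (r x a + CB x a + γ * ∑ x', Phat x a x' * V x') H := by
      refine le_min ?_ ?_
      · linarith [habs.2]
      · have : γ * ∑ x', P x a x' * V x' ≤ γ * H :=
          mul_le_mul_of_nonneg_left hPVH (le_of_lt hγ0)
        linarith [hr1 x a]
    exact hle.trans (le_max_left _ _)
  · rw [hQ]
    refine max_le ?_ ?_
    · refine (min_le_left _ _).trans ?_
      linarith [habs.1, hCB x a]
    · have : 0 ≤ γ * ∑ x', P x a x' * V x' := mul_nonneg hγ0.le hPV0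
      linarith [hr0 x a, hCB x a]
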